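/- Let 𝒞 be a finite concept class over a finite domain X with VC dimension VCD(𝒞) = 1. Then there exists a metric d on X (i.e., d : X × X → ℝ≥0 symmetric, satisfying the triangle inequality, with d(x, x') = 0 iff x = x') such that S^d_min(𝒞) ≤ 2. -/

import Mathlib

open scoped NNReal

/-- The interaction game for learning from a contrast oracle:
`Identifiable pt CS n V` holds iff the learner can guarantee, within at most `n` rounds,
that the version space (starting from `V`) becomes a singleton `{C*}` (i.e. a subsingleton,
since the target always stays in the version space), against every target `C* ∈ V` and
every adversarial choice of contrastive examples from the contrast set `CS`.
A query has type `Q`; `pt q` is the instance whose label is returned; `CS q C V` is the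
contrast set of the query `q` w.r.t. concept `C` and current version space `V`. -/
def Identifiable {X Q : Type*} (pt : Q → X)
    (CS : Q → (X → Bool) → Set (X → Bool) → Set X) :
    ℕ → Set (X → Bool) → Prop
  | 0, V => V.Subsingleton
  | n + 1, V =>
      V.Subsingleton ∨
        ∃ q : Q, ∀ Cstar ∈ V,
          ((CS q Cstar V = ∅ →
            Identifiable pt CS n
              {C ∈ V | C (pt q) = Cstar (pt q) ∧ CS q C V = ∅}) ∧
          (∀ x' ∈ CS q Cstar V,
            Identifiable pt CS n
              {C ∈ V | C (pt q) = Cstar (pt q) ∧ x' ∈ CS q C V ∧ C x' = Cstar x'}))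

/-- The contrast sample complexity of class `𝓒` (as an extended natural number):
the least `n` such that some learner identifies every target within `n` rounds. -/
noncomputable def sampleComplexity {X Q : Type*} (pt : Q → X)
    (CS : Q → (X → Bool) → Set (X → Bool) → Set X) (𝓒 : Set (X → Bool)) : ℕ∞ :=
  sInf {n : ℕ∞ | ∃ k : ℕ, n = (k : ℕ∞) ∧ Identifiable pt CS k 𝓒}

/-- Minimum-distance contrast set: points of opposite label at minimal `d`-distance. -/
def CSmin {X : Type*} (d : X → X → ℝ≥0) (x : X) (C : X → Bool) : Set X :=
  {x' | C x' ≠ C x ∧ ∀ x'' : X, C x'' ≠ C x → d x x' ≤ d x x''}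

/-- Sample complexity in the minimum-distance model. -/
noncomputable def Smin {X : Type*} (d : X → X → ℝ≥0) (𝓒 : Set (X → Bool)) : ℕ∞ :=
  sampleComplexity (id : X → X) (fun x C _ => CSmin d x C) 𝓒

/-- Proximity contrast set: points of opposite label within distance `r` of `x`. -/
def CSprox {X : Type*} (d : X → X → ℝ≥0) (x : X) (r : ℝ≥0) (C : X → Bool) : Set X :=
  {x' | C x' ≠ C x ∧ d x x' ≤ r}

/-- Sample complexity in the proximity model (queries are pairs `(x, r)`). -/
noncomputable def Sprox {X : Type*} (d : X → X → ℝ≥0) (𝓒 : Set (X → Bool)) : ℕ∞ :=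
  sampleComplexity (Prod.fst : X × ℝ≥0 → X) (fun q C _ => CSprox d q.1 q.2 C) 𝓒

/-- Membership-query complexity: the contrast sets are always empty,
so the oracle only ever returns the label of the queried point. -/
noncomputable def SMQ {X : Type*} (𝓒 : Set (X → Bool)) : ℕ∞ :=
  sampleComplexity (id : X → X) (fun _ _ _ => (∅ : Set X)) 𝓒

/-- `𝓒` shatters a finite set `S`: every subset of `S` is cut out by some concept. -/
def Shatters {X : Type*} (𝓒 : Set (X → Bool)) (S : Finset X) : Prop :=
  ∀ T ⊆ S, ∃ C ∈ 𝓒, ∀ x ∈ S, (C x = true ↔ x ∈ T)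

set_option maxHeartbeats 1000000 in

private lemma bool_res1 : ∀ u v t : Bool, u ≠ v → u ≠ t → v = t := by decide
private lemma bool_res2 : ∀ u v : Bool, u ≠ v → u = !v := by decide
private lemma bool_res3 : ∀ u v : Bool, u ≠ !v → u = v := by decide
private lemma bool_res4 : ∀ c : Bool, (!c) = c → False := by decide

private lemma struct_lemma {X : Type*} [Fintype X] (𝒟 : Finset (X → Bool)) :
    ∀ s : Finset X,
    (∀ x ∈ s, ∀ y ∈ s, x ≠ y → ¬(∀ b1 b2 : Bool, ∃ C ∈ 𝒟, C x = b1 ∧ C y = b2)) →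
    ∃ (σ : X → Bool) (r : X → X → Prop) (ℓ : X → ℕ),
      (∀ x y, r x y → x ∈ s ∧ y ∈ s) ∧
      (∀ x y, r x y → ℓ x < ℓ y) ∧
      (∀ C ∈ 𝒟, ∀ x y, r x y → C y ≠ σ y → C x ≠ σ x) ∧
      (∀ C ∈ 𝒟, ∀ x ∈ s, ∀ y ∈ s, C x ≠ σ x → C y ≠ σ y → x = y ∨ r x y ∨ r y x) := by
  classical
  intro s
  induction s using Finset.strongInduction with
  | _ s IH =>
  intro hsh
  by_cases hne : ∃ z ∈ s, ∃ C ∈ 𝒟, ∃ C' ∈ 𝒟, C z ≠ C' z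
  · -- there is a non-constant point; find a "good" point to peel
    have hgood : ∃ z ∈ s, ∃ b : Bool,
        ∀ C ∈ 𝒟, C z = b → ∀ C' ∈ 𝒟, C' z = b → ∀ x ∈ s, C x = C' x := by
      by_contra hbad
      push_neg at hbad
      obtain ⟨z0, hz0s, _⟩ := hne
      obtain ⟨p, hp, hpmin⟩ := Finset.exists_min_image (s ×ˢ (Finset.univ : Finset Bool))
        (fun p => (𝒟.filter fun C => C p.1 = p.2).card) ⟨(z0, true), by simp [hz0s]⟩
      obtain ⟨z, b⟩ := p
      rw [Finset.mem_product] at hp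
      obtain ⟨hzs, -⟩ := hp
      obtain ⟨C, hC𝒟, hCz, C', hC'𝒟, hC'z, y, hys, hCC'⟩ := hbad z hzs b
      have hyz : y ≠ z := by rintro rfl; rw [hCz, hC'z] at hCC'; exact hCC' rfl
      by_cases hcc : ∃ D ∈ 𝒟, D z = !b ∧ ∃ D' ∈ 𝒟, D' z = !b ∧ D y ≠ D' y
      · obtain ⟨D, hD𝒟, hDz, D', hD'𝒟, hD'z, hDD'⟩ := hcc
        refine hsh z hzs y hys (Ne.symm hyz) ?_
        intro b1 b2
        have pick : ∀ (E E' : X → Bool), E ∈ 𝒟 → E' ∈ 𝒟 → E z = b1 → E' z = b1 →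
            E y ≠ E' y → ∃ C ∈ 𝒟, C z = b1 ∧ C y = b2 := by
          intro E E' hE hE' hEz hE'z hne2
          by_cases h2 : E y = b2
          · exact ⟨E, hE, hEz, h2⟩
          · exact ⟨E', hE', hE'z, bool_res1 (E y) (E' y) b2 hne2 h2⟩
        by_cases hb1 : b1 = b
        · subst hb1; exact pick C C' hC𝒟 hC'𝒟 hCz hC'z hCC'
        · have hb1' : b1 = !b := bool_res2 b1 b hb1
          subst hb1'; exact pick D D' hD𝒟 hD'𝒟 hDz hD'z hDD'
      · push_neg at hcc
        -- the (!b)-side is constant at y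
        obtain ⟨C0, hC0𝒟, hC0z, -⟩ := hbad z hzs (!b)
        have hsub : (𝒟.filter fun E => E y = !(C0 y)) ⊆ (𝒟.filter fun E => E z = b) := by
          intro E hE
          rw [Finset.mem_filter] at hE ⊢
          refine ⟨hE.1, ?_⟩
          by_contra hEz
          have hEz' : E z = !b := bool_res2 (E z) b hEz
          have := hcc E hE.1 hEz' C0 hC0𝒟 hC0z
          rw [hE.2] at this
          exact bool_res4 (C0 y) this
        have hne2 : ((𝒟.filter fun E => E y = !(C0 y))).Nonempty := by
          by_cases h2 : C y = !(C0 y)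
          · exact ⟨C, Finset.mem_filter.mpr ⟨hC𝒟, h2⟩⟩
          · refine ⟨C', Finset.mem_filter.mpr ⟨hC'𝒟, ?_⟩⟩
            exact bool_res1 (C y) (C' y) (!(C0 y)) hCC' h2
        have hmin2 := hpmin (y, !(C0 y)) (by rw [Finset.mem_product]; exact ⟨hys, Finset.mem_univ _⟩)
        dsimp only at hmin2
        have heq2 : (𝒟.filter fun E => E y = !(C0 y)) = (𝒟.filter fun E => E z = b) :=
          Finset.eq_of_subset_of_card_le hsub hmin2
        have hCy : C y = !(C0 y) := by
          have hmem : C ∈ 𝒟.filter (fun E => E z = b) := Finset.mem_filter.mpr ⟨hC𝒟, hCz⟩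
          rw [← heq2] at hmem
          exact (Finset.mem_filter.mp hmem).2
        have hC'y : C' y = !(C0 y) := by
          have hmem : C' ∈ 𝒟.filter (fun E => E z = b) := Finset.mem_filter.mpr ⟨hC'𝒟, hC'z⟩
          rw [← heq2] at hmem
          exact (Finset.mem_filter.mp hmem).2
        rw [hCy, hC'y] at hCC'; exact hCC' rfl
    -- peel the good point z
    obtain ⟨z, hzs, b, hgb⟩ := hgood
    have hss : s.erase z ⊂ s := Finset.erase_ssubset hzs
    obtain ⟨σ', r', ℓ', hsupp', hmono', hdown', hchain'⟩ := IH (s.erase z) hss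
      (fun x hx y hy => hsh x (Finset.mem_of_mem_erase hx) y (Finset.mem_of_mem_erase hy))
    set M := Finset.univ.sup ℓ' with hM
    refine ⟨Function.update σ' z (!b),
      (fun x y => r' x y ∨ (y = z ∧ x ∈ s.erase z ∧ ∃ C ∈ 𝒟, C z = b ∧ C x ≠ σ' x)),
      (fun x => if x = z then M + 1 else ℓ' x), ?_, ?_, ?_, ?_⟩
    · rintro x y (h | ⟨hyz, hx, -⟩)
      · have := hsupp' x y h
        exact ⟨Finset.mem_of_mem_erase this.1, Finset.mem_of_mem_erase this.2⟩
      · exact ⟨Finset.mem_of_mem_erase hx, hyz ▸ hzs⟩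
    · rintro x y (h | ⟨hyz, hx, -⟩)
      · have hx := (hsupp' x y h).1
        have hy := (hsupp' x y h).2
        have hxz : x ≠ z := Finset.ne_of_mem_erase hx
        have hyz : y ≠ z := Finset.ne_of_mem_erase hy
        simpa [hxz, hyz] using hmono' x y h
      · have hxz : x ≠ z := Finset.ne_of_mem_erase hx
        have : ℓ' x ≤ M := Finset.le_sup (Finset.mem_univ x)
        rw [hyz]
        simp [hxz]; omega
    · rintro C hC x y (h | ⟨hyz, hx, C₁, hC₁𝒟, hC₁z, hC₁x⟩) hy
      · have hxz : x ≠ z := Finset.ne_of_mem_erase (hsupp' x y h).1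
        have hyz : y ≠ z := Finset.ne_of_mem_erase (hsupp' x y h).2
        rw [Function.update_of_ne hyz] at hy
        rw [Function.update_of_ne hxz]
        exact hdown' C hC x y h hy
      · have hxz : x ≠ z := Finset.ne_of_mem_erase hx
        rw [hyz, Function.update_self] at hy
        have hCz : C z = b := bool_res3 (C z) b hy
        rw [Function.update_of_ne hxz]
        rw [hgb C hC hCz C₁ hC₁𝒟 hC₁z x (Finset.mem_of_mem_erase hx)]
        exact hC₁x
    · intro C hC x hxs y hys hx hy
      by_cases hxz : x = z <;> by_cases hyz : y = z
      · left; rw [hxz, hyz]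
      · rw [hxz, Function.update_self] at hx
        have hCz : C z = b := bool_res3 (C z) b hx
        rw [Function.update_of_ne hyz] at hy
        exact Or.inr (Or.inr (Or.inr ⟨hxz, Finset.mem_erase.mpr ⟨hyz, hys⟩, C, hC, hCz, hy⟩))
      · rw [hyz, Function.update_self] at hy
        have hCz : C z = b := bool_res3 (C z) b hy
        rw [Function.update_of_ne hxz] at hx
        exact Or.inr (Or.inl (Or.inr ⟨hyz, Finset.mem_erase.mpr ⟨hxz, hxs⟩, C, hC, hCz, hx⟩))
      · rw [Function.update_of_ne hxz] at hx
        rw [Function.update_of_ne hyz] at hy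
        rcases hchain' C hC x (Finset.mem_erase.mpr ⟨hxz, hxs⟩) y (Finset.mem_erase.mpr ⟨hyz, hys⟩) hx hy with h | h | h
        · exact Or.inl h
        · exact Or.inr (Or.inl (Or.inl h))
        · exact Or.inr (Or.inr (Or.inl h))
  · -- constant on s
    push_neg at hne
    rcases 𝒟.eq_empty_or_nonempty with h𝒟 | ⟨C0, hC0⟩
    · subst h𝒟
      exact ⟨fun _ => false, fun _ _ => False, fun _ => 0,
        by simp, by simp, by simp, by simp⟩
    · refine ⟨C0, fun _ _ => False, fun _ => 0, by simp, by simp, by simp, ?_⟩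
      intro C hC x hxs y hys hx _
      exact absurd (hne x hxs C hC C0 hC0) hx

private lemma bool_res5 : ∀ a b c : Bool, ((a ≠ c) ↔ (b ≠ c)) → a = b := by decide
private lemma bool_A1 : ∀ a2 a1 a0 s2 s0 : Bool,
    a2 ≠ a1 → a1 ≠ a0 → a0 = s0 → s2 ≠ s0 → a2 ≠ s2 := by decide
private lemma bool_A2 : ∀ az sz s0 a1 a0 : Bool,
    az ≠ sz → sz ≠ s0 → a1 ≠ a0 → a0 = s0 → az ≠ a1 := by decide
private lemma bool_B1 : ∀ a1 a0 s1 s0 : Bool,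
    a1 ≠ a0 → a0 = s0 → s1 ≠ s0 → a1 = s1 := by decide
private lemma bool_B2 : ∀ a2 a1 s1 s2 s0 : Bool,
    a2 ≠ a1 → a1 = s1 → s1 ≠ s0 → s2 ≠ s0 → a2 ≠ s2 := by decide
private lemma bool_B3 : ∀ az sz s0 a1 s1 : Bool,
    az ≠ sz → sz ≠ s0 → a1 = s1 → s1 ≠ s0 → az ≠ a1 := by decide

private lemma csmin_nonempty {X : Type*} [Fintype X] (d : X → X → ℝ≥0) (x : X) (C : X → Bool)
    (h : ∃ y, C y ≠ C x) : (CSmin d x C).Nonempty := by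
  classical
  obtain ⟨y0, hy0⟩ := h
  obtain ⟨m, hm, hmin⟩ := Finset.exists_min_image
    (Finset.univ.filter fun y => C y ≠ C x) (fun y => d x y) ⟨y0, by simp [hy0]⟩
  rw [Finset.mem_filter] at hm
  exact ⟨m, hm.2, fun q hq => hmin q (by simp [hq])⟩

theorem statement13 {X : Type*} [Fintype X] (𝓒 : Set (X → Bool))
    (hub : ∀ S : Finset X, Shatters 𝓒 S → S.card ≤ 1)
    (hlb : ∃ S : Finset X, S.card = 1 ∧ Shatters 𝓒 S) :
    ∃ d : X → X → ℝ≥0,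
      (∀ x y, d x y = d y x) ∧
      (∀ x y z, d x z ≤ d x y + d y z) ∧
      (∀ x y, d x y = 0 ↔ x = y) ∧
      Smin d 𝓒 ≤ 2 := by
  classical
  have hshat : ∀ x y : X, x ≠ y →
      ¬(∀ b1 b2 : Bool, ∃ C ∈ Set.Finite.toFinset (Set.toFinite 𝓒), C x = b1 ∧ C y = b2) := by
    intro x y hxy hall
    have hSh : Shatters 𝓒 {x, y} := by
      intro T hT
      obtain ⟨C, hC, hCx, hCy⟩ := hall (decide (x ∈ T)) (decide (y ∈ T))
      refine ⟨C, (Set.Finite.mem_toFinset _).1 hC, ?_⟩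
      intro w hw
      rcases Finset.mem_insert.1 hw with rfl | hw
      · rw [hCx]; simp
      · rw [Finset.mem_singleton.1 hw, hCy]; simp
    have h2 := hub {x, y} hSh
    rw [Finset.card_pair hxy] at h2
    omega
  obtain ⟨σ, r, ℓ, hsupp, hmono, hdownF, hchainF⟩ :=
    struct_lemma (Set.Finite.toFinset (Set.toFinite 𝓒)) Finset.univ
      (fun x _ y _ hxy => hshat x y hxy)
  have hdown : ∀ C ∈ 𝓒, ∀ x y, r x y → C y ≠ σ y → C x ≠ σ x := fun C hC =>
    hdownF C ((Set.Finite.mem_toFinset _).2 hC)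
  have hchain : ∀ C ∈ 𝓒, ∀ x y, C x ≠ σ x → C y ≠ σ y → x = y ∨ r x y ∨ r y x := fun C hC x y hx hy =>
    hchainF C ((Set.Finite.mem_toFinset _).2 hC) x (Finset.mem_univ x) y (Finset.mem_univ y) hx hy
  by_cases hU : ∃ x : X, ∃ C ∈ 𝓒, C x ≠ σ x
  case neg =>
    push_neg at hU
    have hss : 𝓒.Subsingleton := by
      intro C1 h1 C2 h2
      funext x
      rw [hU x C1 h1, hU x C2 h2]
    refine ⟨fun x y => if x = y then 0 else 1, ?_, ?_, ?_, ?_⟩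
    · intro x y
      dsimp only
      by_cases h : x = y
      · rw [if_pos h, if_pos h.symm]
      · rw [if_neg h, if_neg (fun hh => h hh.symm)]
    · intro x y z
      dsimp only
      by_cases h1 : x = z
      · rw [if_pos h1]; exact zero_le
      · by_cases h2 : x = y
        · rw [if_pos h2, zero_add, h2]
        · by_cases h3 : y = z
          · rw [if_pos h3, add_zero, ← h3]
          · rw [if_neg h1, if_neg h2, if_neg h3]
            calc (1 : ℝ≥0) ≤ 1 + 1 := by norm_num
            _ = _ := rfl
    · intro x y
      dsimp only
      by_cases h : x = y
      · simp [h]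
      · rw [if_neg h]; simp [h]
    · exact sInf_le ⟨2, by norm_cast, Or.inl hss⟩
  case pos =>
    obtain ⟨xw, hxw⟩ := hU
    obtain ⟨x0, hx0mem, hx0max'⟩ := Finset.exists_max_image
      (Finset.univ.filter fun x => ∃ C ∈ 𝓒, C x ≠ σ x) ℓ ⟨xw, by simpa using hxw⟩
    have hx0max : ∀ y, (∃ C ∈ 𝓒, C y ≠ σ y) → ℓ y ≤ ℓ x0 := fun y hy =>
      hx0max' y (by simpa using hy)
    have key0 : ∀ C ∈ 𝓒, C x0 ≠ σ x0 → ∀ z, C z ≠ σ z → (r z x0 ∨ z = x0) := by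
      intro C hC h0 z hz
      rcases hchain C hC z x0 hz h0 with h | h | h
      · exact Or.inr h
      · exact Or.inl h
      · exact absurd (hx0max z ⟨C, hC, hz⟩) (not_le.mpr (hmono x0 z h))
    have hOpp : ∀ C1 ∈ 𝓒, ∀ C2 ∈ 𝓒, C1 x0 ≠ σ x0 → C2 x0 ≠ σ x0 → C1 = C2 := by
      intro C1 h1 C2 h2 e1 e2
      funext z
      refine bool_res5 (C1 z) (C2 z) (σ z) ⟨?_, ?_⟩
      · intro hz
        rcases key0 C1 h1 e1 z hz with h | h
        · exact hdown C2 h2 z x0 h e2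
        · rw [h]; exact e2
      · intro hz
        rcases key0 C2 h2 e2 z hz with h | h
        · exact hdown C1 h1 z x0 h e1
        · rw [h]; exact e1
    -- numeric setup
    set M := Finset.univ.sup ℓ with hMdef
    set N := M + 2 with hNdef
    set Bc := 100 * N * N * N with hBdef
    set dr : X → ℕ := fun z => M + 1 - ℓ z with hdrdef
    set ρ : X → Prop := fun z => σ z ≠ σ x0 with hρdef
    set RR : X → Prop := fun v => ρ v ∧ ∀ w, r w v → ρ w with hRRdef
    set regA : X → X → Prop := fun p v => r p v ∧ ∀ w, r p w → (w = v ∨ r w v) → ρ w with hregdef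
    set T4 : X → ℕ := fun q => 3 * Bc + dr q + (if ρ q then 2 * N else 0) with hT4def
    set A : X → X → ℕ := fun x y =>
      if x = x0 then T4 y
      else if y = x0 then T4 x
      else if RR x ∧ RR y then dr x + dr y
      else if RR x ∧ ρ y then Bc + N * dr x + dr y
      else if RR y ∧ ρ x then Bc + N * dr y + dr x
      else if ¬ ρ x ∧ regA x y then 2 * Bc + dr y
      else if ¬ ρ y ∧ regA y x then 2 * Bc + dr x
      else 4 * Bc with hAdef
    set d : X → X → ℝ≥0 := fun x y =>
      if x = y then 0 else ((5 * Bc + min (A x y) (A y x) : ℕ) : ℝ≥0) with hddef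
    have hℓM : ∀ q, ℓ q ≤ M := fun q => Finset.le_sup (Finset.mem_univ q)
    have hdrN : ∀ q, dr q ≤ M + 1 := by intro q; simp only [hdrdef]; omega
    have hdr1 : ∀ q, 1 ≤ dr q := by intro q; have := hℓM q; simp only [hdrdef]; omega
    have hdrlt : ∀ {w v}, r w v → dr v < dr w := by
      intro w v h
      have h1 := hmono w v h
      have h2 := hℓM v
      simp only [hdrdef]; omega
    have h2N : 2 ≤ N := by omega
    have hNNB : N * N + N < Bc := by
      have e1 : N * N ≤ N * N * N := by nlinarith
      have e2 : N ≤ N * N * N := by nlinarith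
      have e3 : 0 < N * N * N := by positivity
      rw [hBdef]
      nlinarith
    have hNB : N < Bc := by nlinarith [hNNB, sq_nonneg N]
    have h3NB : 3 * N < Bc := by nlinarith [hNNB, h2N]
    have hdrBc : ∀ q, dr q < Bc := by
      intro q; have := hdrN q; omega
    have hMB : 2 * (M + 1) < Bc := by
      have : 2 * N ≤ N * N := by nlinarith
      omega
    have hNMB : N * (M + 1) + (M + 1) < Bc := by
      have e1 : N * (M + 1) ≤ N * N := by
        have : M + 1 ≤ N := by omega
        exact Nat.mul_le_mul_left N this
      omega
    have hρx0 : ¬ ρ x0 := by simp [hρdef]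
    have hRRρ : ∀ v, RR v → ρ v := by
      intro v h; rw [hRRdef] at h; exact h.1
    have hregρ : ∀ p v, regA p v → ρ v := by
      intro p v h; rw [hregdef] at h; exact h.2 v h.1 (Or.inl rfl)
    have hregr : ∀ p v, regA p v → r p v := by
      intro p v h; rw [hregdef] at h; exact h.1
    -- T4 facts
    have hT4ρ : ∀ q, ρ q → T4 q = 3 * Bc + dr q + 2 * N := by
      intro q h; simp only [hT4def]; rw [if_pos h]
    have hT4n : ∀ q, ¬ ρ q → T4 q = 3 * Bc + dr q := by
      intro q h; simp only [hT4def]; rw [if_neg h]; omega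
    have hT4lb : ∀ q, 3 * Bc ≤ T4 q := by
      intro q; simp only [hT4def]; split_ifs <;> omega
    have hT4ub : ∀ q, T4 q ≤ 4 * Bc := by
      intro q
      have h1 := hdrN q
      simp only [hT4def]; split_ifs <;> omega
    -- A value lemmas
    have hAx0 : ∀ w, A x0 w = T4 w := by
      intro w; simp [hAdef]
    have hAx0' : ∀ w, w ≠ x0 → A w x0 = T4 w := by
      intro w hw; simp [hAdef, hw]
    have hA_RR : ∀ u v, u ≠ x0 → v ≠ x0 → RR u → RR v → A u v = dr u + dr v := by
      intro u v hu0 hv0 hRu hRv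
      simp only [hAdef]; rw [if_neg hu0, if_neg hv0, if_pos ⟨hRu, hRv⟩]
    have hA_R1 : ∀ u v, u ≠ x0 → v ≠ x0 → ¬ RR u → ρ u → RR v →
        A u v = Bc + N * dr v + dr u ∧ A v u = Bc + N * dr v + dr u := by
      intro u v hu0 hv0 hnRu hρu hRv
      constructor
      · simp only [hAdef]
        rw [if_neg hu0, if_neg hv0, if_neg (fun h => hnRu h.1), if_neg (fun h => hnRu h.1),
          if_pos ⟨hRv, hρu⟩]
      · simp only [hAdef]
        rw [if_neg hv0, if_neg hu0, if_neg (fun h => hnRu h.2), if_pos ⟨hRv, hρu⟩]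
    have hA_reg : ∀ u v, u ≠ x0 → ¬ ρ u → regA u v →
        A u v = 2 * Bc + dr v ∧ A v u = 2 * Bc + dr v := by
      intro u v hu0 hρu hreg
      have hρv : ρ v := hregρ u v hreg
      have hv0 : v ≠ x0 := fun h => hρx0 (h ▸ hρv)
      constructor
      · simp only [hAdef]
        rw [if_neg hu0, if_neg hv0, if_neg (fun h => hρu (hRRρ u h.1)),
          if_neg (fun h => hρu (hRRρ u h.1)), if_neg (fun h => hρu h.2),
          if_pos ⟨hρu, hreg⟩]
      · simp only [hAdef]
        rw [if_neg hv0, if_neg hu0, if_neg (fun h => hρu (hRRρ u h.2)),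
          if_neg (fun h => hρu h.2), if_neg (fun h => hρu (hRRρ u h.1)),
          if_neg (fun h => h.1 hρv), if_pos ⟨hρu, hreg⟩]
      -- the sixth branch of A v u is (¬ρ v ∧ regA v u); impossible since ρ v holds
    have hA_lb3 : ∀ u v, u ≠ x0 → ¬ ρ u → ¬ regA u v → 3 * Bc ≤ A u v ∧ 3 * Bc ≤ A v u := by
      intro u v hu0 hρu hnreg
      constructor
      · simp only [hAdef]
        rw [if_neg hu0]
        by_cases hv0 : v = x0
        · rw [if_pos hv0]; rw [hT4n u hρu]; omega
        · rw [if_neg hv0, if_neg (fun h => hρu (hRRρ u h.1)), if_neg (fun h => hρu (hRRρ u h.1)),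
            if_neg (fun h => hρu h.2), if_neg (fun h => hnreg h.2),
            if_neg (fun h => hρu (hregρ v u h.2))]
          omega
      · by_cases hv0 : v = x0
        · simp only [hAdef]
          rw [if_pos hv0]; rw [hT4n u hρu]; omega
        · simp only [hAdef]
          rw [if_neg hv0, if_neg hu0, if_neg (fun h => hρu (hRRρ u h.2)),
            if_neg (fun h => hρu h.2), if_neg (fun h => hρu (hRRρ u h.1)),
            if_neg (fun h => hρu (hregρ v u h.2)), if_neg (fun h => hnreg h.2)]
          omega
    have hA_lb1 : ∀ u v, u ≠ x0 → ρ u → ¬ RR v → Bc ≤ A u v ∧ Bc ≤ A v u := by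
      intro u v hu0 hρu hnRv
      constructor
      · simp only [hAdef]
        rw [if_neg hu0]
        by_cases hv0 : v = x0
        · rw [if_pos hv0]; have := hT4lb u; exact le_trans (Nat.le_mul_of_pos_left _ (by norm_num)) this
        · rw [if_neg hv0, if_neg (fun h => hnRv h.2)]
          by_cases h4 : RR u ∧ ρ v
          · rw [if_pos h4]
            exact le_trans (Nat.le_add_right Bc (N * dr u)) (Nat.le_add_right _ _)
          · rw [if_neg h4, if_neg (fun h => hnRv h.1), if_neg (fun h => h.1 hρu)]
            by_cases h7 : ¬ ρ v ∧ regA v u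
            · rw [if_pos h7]; omega
            · rw [if_neg h7]; omega
      · by_cases hv0 : v = x0
        · simp only [hAdef]
          rw [if_pos hv0]; have := hT4lb u; exact le_trans (Nat.le_mul_of_pos_left _ (by norm_num)) this
        · simp only [hAdef]
          rw [if_neg hv0, if_neg hu0, if_neg (fun h => hnRv h.1), if_neg (fun h => hnRv h.1)]
          by_cases h5 : RR u ∧ ρ v
          · rw [if_pos h5]
            exact le_trans (Nat.le_add_right Bc (N * dr u)) (Nat.le_add_right _ _)
          · rw [if_neg h5]
            by_cases h6 : ¬ ρ v ∧ regA v u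
            · rw [if_pos h6]; omega
            · rw [if_neg h6, if_neg (fun h => h.1 hρu)]; omega
    have hA_lb2 : ∀ u v, u ≠ x0 → ρ u → ¬ RR u → ¬ RR v → 2 * Bc ≤ A u v ∧ 2 * Bc ≤ A v u := by
      intro u v hu0 hρu hnRu hnRv
      constructor
      · simp only [hAdef]
        rw [if_neg hu0]
        by_cases hv0 : v = x0
        · rw [if_pos hv0]; have := hT4lb u; exact le_trans (Nat.mul_le_mul_right Bc (by norm_num : 2 ≤ 3)) this
        · rw [if_neg hv0, if_neg (fun h => hnRu h.1), if_neg (fun h => hnRu h.1),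
            if_neg (fun h => hnRv h.1), if_neg (fun h => h.1 hρu)]
          by_cases h7 : ¬ ρ v ∧ regA v u
          · rw [if_pos h7]; omega
          · rw [if_neg h7]; omega
      · by_cases hv0 : v = x0
        · simp only [hAdef]
          rw [if_pos hv0]; have := hT4lb u; exact le_trans (Nat.mul_le_mul_right Bc (by norm_num : 2 ≤ 3)) this
        · simp only [hAdef]
          rw [if_neg hv0, if_neg hu0, if_neg (fun h => hnRv h.1), if_neg (fun h => hnRv h.1),
            if_neg (fun h => hnRu h.1)]
          by_cases h6 : ¬ ρ v ∧ regA v u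
          · rw [if_pos h6]; omega
          · rw [if_neg h6, if_neg (fun h => h.1 hρu)]; omega
    have hA4 : ∀ u v, A u v ≤ 4 * Bc := by
      intro u v
      have t1 := hT4ub u
      have t2 := hT4ub v
      have d1 := hdrN u
      have d2 := hdrN v
      have m1 : N * dr u ≤ N * (M + 1) := Nat.mul_le_mul_left N (hdrN u)
      have m2 : N * dr v ≤ N * (M + 1) := Nat.mul_le_mul_left N (hdrN v)
      simp only [hAdef]
      clear_value Bc
      split_ifs <;> omega
    -- distance lemmas
    have hd_val : ∀ u v, u ≠ v → ∀ k : ℕ, A u v = k → A v u = k →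
        d u v = ((5 * Bc + k : ℕ) : ℝ≥0) := by
      intro u v h k h1 h2
      simp only [hddef]
      rw [if_neg h, h1, h2, min_self]
    have hd_lb : ∀ u v, u ≠ v → ∀ k : ℕ, k ≤ A u v → k ≤ A v u →
        ((5 * Bc + k : ℕ) : ℝ≥0) ≤ d u v := by
      intro u v h k h1 h2
      simp only [hddef]
      rw [if_neg h]
      exact Nat.cast_le.mpr (by omega)
    have hdx0 : ∀ w, w ≠ x0 → d x0 w = ((5 * Bc + T4 w : ℕ) : ℝ≥0) :=
      fun w hw => hd_val x0 w (fun h => hw h.symm) (T4 w) (hAx0 w) (hAx0' w hw)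
    have hcastlt : ∀ a b : ℕ, a < b → ((a : ℝ≥0) < (b : ℝ≥0)) := fun a b h => Nat.cast_lt.mpr h
    have csempty : ∀ (q : X) (C : X → Bool), CSmin d q C = ∅ → ∀ y, C y = C q := by
      intro q C h y
      by_contra hy
      obtain ⟨m, hm⟩ := csmin_nonempty d q C ⟨y, hy⟩
      rw [h] at hm
      exact Set.notMem_empty m hm
    -- basic consequences of ρ
    have hρne : ∀ {z}, ρ z → σ z ≠ σ x0 := by intro z h; rw [hρdef] at h; exact h
    have hρeq : ∀ {z}, ¬ ρ z → σ z = σ x0 := by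
      intro z h; rw [hρdef] at h; exact not_ne_iff.mp h
    have hρnex0 : ∀ {z}, ρ z → z ≠ x0 := fun {z} h hz => hρx0 (hz ▸ h)
    refine ⟨d, ?_, ?_, ?_, ?_⟩
    · -- symmetry
      intro x y
      simp only [hddef]
      by_cases h : x = y
      · rw [if_pos h, if_pos h.symm]
      · rw [if_neg h, if_neg (fun hh => h hh.symm), min_comm]
    · -- triangle
      intro x y z
      simp only [hddef]
      by_cases h1 : x = z
      · rw [if_pos h1]; exact zero_le
      · by_cases h2 : x = y
        · rw [if_pos h2, zero_add, h2]
        · by_cases h3 : y = z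
          · rw [if_pos h3, add_zero, ← h3]
          · rw [if_neg h1, if_neg h2, if_neg h3, ← Nat.cast_add, Nat.cast_le]
            have q1 : min (A x z) (A z x) ≤ 4 * Bc := le_trans (min_le_left _ _) (hA4 x z)
            omega
    · -- zero iff
      intro x y
      simp only [hddef]
      by_cases h : x = y
      · rw [if_pos h]; simp [h]
      · rw [if_neg h]
        constructor
        · intro hc
          exfalso
          have : (5 * Bc + min (A x y) (A y x)) = 0 := by exact_mod_cast hc
          omega
        · intro hc; exact absurd hc h
    · -- Smin ≤ 2
      have hIdent : Identifiable (id : X → X) (fun x C _ => CSmin d x C) 2 𝓒 := by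
        refine Or.inr ⟨x0, ?_⟩
        intro Cstar hCstar
        constructor
        · -- ω branch at level 2: all consistent concepts are constant
          intro _
          refine Or.inl ?_
          rintro C1 ⟨h1𝓒, h1lab, h1cs⟩ C2 ⟨h2𝓒, h2lab, h2cs⟩
          funext y
          have e1 := csempty x0 C1 h1cs y
          have e2 := csempty x0 C2 h2cs y
          simp only [id_eq] at h1lab h2lab
          rw [e1, e2, h1lab, h2lab]
        · -- contrast branch at level 2
          intro x' hx'
          obtain ⟨hx'op, hx'min⟩ := (hx' : Cstar x' ≠ Cstar x0 ∧
            ∀ y, Cstar y ≠ Cstar x0 → d x0 x' ≤ d x0 y)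
          have hx'x0 : x' ≠ x0 := fun h => hx'op (h ▸ rfl)
          by_cases hCs0 : Cstar x0 = σ x0
          case neg =>
            -- the target is on the singleton side of x0 : version space already a singleton
            refine Or.inl ?_
            rintro C1 ⟨h1𝓒, h1lab, -, -⟩ C2 ⟨h2𝓒, h2lab, -, -⟩
            simp only [id_eq] at h1lab h2lab
            exact hOpp C1 h1𝓒 C2 h2𝓒 (by rw [h1lab]; exact hCs0) (by rw [h2lab]; exact hCs0)
          case pos =>
            by_cases hρx' : ρ x'
            case neg =>
              -- CASE A : x' is on the same σ-side as x0, so x' ∈ Δ(C) for all C in the fiber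
              have hσx' : σ x' = σ x0 := hρeq hρx'
              have LA : ∀ C, C ∈ 𝓒 → C x0 = σ x0 → C x' ≠ C x0 →
                  (∀ y, C y ≠ C x0 → d x0 x' ≤ d x0 y) →
                  ∀ z, C z ≠ σ z → (r z x' ∨ z = x') ∨ regA x' z := by
                intro C hC hCx0 hop1 hmin1 z hz
                have hCx'neq : C x' ≠ σ x' := by rw [hσx', ← hCx0]; exact hop1
                rcases hchain C hC z x' hz hCx'neq with h | h | h
                · exact Or.inl (Or.inr h)
                · exact Or.inl (Or.inl h)
                · refine Or.inr ?_
                  simp only [hregdef]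
                  refine ⟨h, ?_⟩
                  intro w hw hwz
                  by_contra hρw0
                  have hρw : ¬ ρ w := fun hh => hh hρw0
                  have hwΔ : C w ≠ σ w := by
                    rcases hwz with rfl | hwz
                    · exact hz
                    · exact hdown C hC w z hwz hz
                  have hwx0 : w ≠ x0 := by rintro rfl; exact hwΔ hCx0
                  have hopw : C w ≠ C x0 := by rw [hCx0, ← hρeq hρw]; exact hwΔ
                  have hle := hmin1 w hopw
                  have hlt : d x0 w < d x0 x' := by
                    rw [hdx0 w hwx0, hdx0 x' hx'x0, hT4n w hρw, hT4n x' hρx']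
                    exact hcastlt _ _ (by have := hdrlt hw; omega)
                  exact absurd hle (not_le.mpr hlt)
              refine Or.inr ⟨x', ?_⟩
              intro Cstar' hCstar'
              constructor
              · -- ω at level 1 : impossible, fiber members are non-constant
                intro _
                rintro C1 ⟨⟨h1𝓒, h1lab, h1cs, h1labx'⟩, -, h1cs2⟩ C2 -
                exfalso
                obtain ⟨h1op, -⟩ := (h1cs : C1 x' ≠ C1 x0 ∧
                  ∀ y, C1 y ≠ C1 x0 → d x0 x' ≤ d x0 y)
                exact h1op (csempty x' C1 h1cs2 x0).symm
              · intro x'' hx''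
                by_cases hreg : regA x' x''
                · -- x'' in the region above x'
                  have hρx'' : ρ x'' := hregρ x' x'' hreg
                  have hsubΔ : ∀ C, C ∈ 𝓒 → C x0 = σ x0 → C x' ≠ C x0 →
                      (∀ y, C y ≠ C x0 → d x0 x' ≤ d x0 y) → C x'' ≠ C x' →
                      (∀ y, C y ≠ C x' → d x' x'' ≤ d x' y) →
                      (C x'' ≠ σ x'') ∧ (∀ z, C z ≠ σ z → (r z x'' ∨ z = x'')) := by
                    intro C hC hCx0 hop1 hmin1 hop2 hmin2
                    have he5 : C x'' ≠ σ x'' :=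
                      bool_A1 (C x'') (C x') (C x0) (σ x'') (σ x0) hop2 hop1 hCx0 (hρne hρx'')
                    refine ⟨he5, ?_⟩
                    intro z hz
                    rcases hchain C hC z x'' hz he5 with h | h | h
                    · exact Or.inr h
                    · exact Or.inl h
                    · exfalso
                      rcases LA C hC hCx0 hop1 hmin1 z hz with h' | h'
                      · have l1 := hmono x'' z h
                        have l2 := hmono x' x'' (hregr x' x'' hreg)
                        rcases h' with h' | rfl
                        · exact absurd (hmono z x' h') (by omega)
                        · omega
                      · have hzρ : ρ z := hregρ x' z h'
                        have hopz : C z ≠ C x' :=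
                          bool_A2 (C z) (σ z) (σ x0) (C x') (C x0) hz (hρne hzρ) hop1 hCx0
                        have hzx' : z ≠ x' := fun h0 => hρx' (h0 ▸ hzρ)
                        have hx''x' : x'' ≠ x' := fun h0 => hρx' (h0 ▸ hρx'')
                        have hle := hmin2 z hopz
                        have v1 := hA_reg x' z hx'x0 hρx' h'
                        have v2 := hA_reg x' x'' hx'x0 hρx' hreg
                        have hlt : d x' z < d x' x'' := by
                          rw [hd_val x' z (Ne.symm hzx') _ v1.1 v1.2,
                            hd_val x' x'' (Ne.symm hx''x') _ v2.1 v2.2]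
                          exact hcastlt _ _ (by have := hdrlt h; omega)
                        exact absurd hle (not_le.mpr hlt)
                  rintro C1 ⟨⟨h1𝓒, h1lab, h1cs, -⟩, -, h1cs2, -⟩
                    C2 ⟨⟨h2𝓒, h2lab, h2cs, -⟩, -, h2cs2, -⟩
                  simp only [id_eq] at h1lab h2lab
                  obtain ⟨h1op, h1min⟩ := (h1cs : C1 x' ≠ C1 x0 ∧
                    ∀ y, C1 y ≠ C1 x0 → d x0 x' ≤ d x0 y)
                  obtain ⟨h2op, h2min⟩ := (h2cs : C2 x' ≠ C2 x0 ∧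
                    ∀ y, C2 y ≠ C2 x0 → d x0 x' ≤ d x0 y)
                  obtain ⟨h1op2, h1min2⟩ := (h1cs2 : C1 x'' ≠ C1 x' ∧
                    ∀ y, C1 y ≠ C1 x' → d x' x'' ≤ d x' y)
                  obtain ⟨h2op2, h2min2⟩ := (h2cs2 : C2 x'' ≠ C2 x' ∧
                    ∀ y, C2 y ≠ C2 x' → d x' x'' ≤ d x' y)
                  have d1 := hsubΔ C1 h1𝓒 (h1lab.trans hCs0) h1op h1min h1op2 h1min2
                  have d2 := hsubΔ C2 h2𝓒 (h2lab.trans hCs0) h2op h2min h2op2 h2min2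
                  funext z
                  refine bool_res5 (C1 z) (C2 z) (σ z) ⟨?_, ?_⟩
                  · intro hz
                    rcases d1.2 z hz with h | h
                    · exact hdown C2 h2𝓒 z x'' h d2.1
                    · rw [h]; exact d2.1
                  · intro hz
                    rcases d2.2 z hz with h | h
                    · exact hdown C1 h1𝓒 z x'' h d1.1
                    · rw [h]; exact d1.1
                · -- x'' not in the region : the region must be disjoint from Δ(C)
                  have hsubΔ : ∀ C, C ∈ 𝓒 → C x0 = σ x0 → C x' ≠ C x0 →
                      (∀ y, C y ≠ C x0 → d x0 x' ≤ d x0 y) → C x'' ≠ C x' →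
                      (∀ y, C y ≠ C x' → d x' x'' ≤ d x' y) →
                      (C x' ≠ σ x') ∧ (∀ z, C z ≠ σ z → (r z x' ∨ z = x')) := by
                    intro C hC hCx0 hop1 hmin1 hop2 hmin2
                    have he3 : C x' ≠ σ x' := by rw [hσx', ← hCx0]; exact hop1
                    refine ⟨he3, ?_⟩
                    intro z hz
                    rcases LA C hC hCx0 hop1 hmin1 z hz with h | h'
                    · exact h
                    · exfalso
                      have hzρ : ρ z := hregρ x' z h'
                      have hopz : C z ≠ C x' :=
                        bool_A2 (C z) (σ z) (σ x0) (C x') (C x0) hz (hρne hzρ) hop1 hCx0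
                      have hzx' : z ≠ x' := fun h0 => hρx' (h0 ▸ hzρ)
                      have hx''x' : x'' ≠ x' := fun h0 => hop2 (by rw [h0])
                      have hle := hmin2 z hopz
                      have v1 := hA_reg x' z hx'x0 hρx' h'
                      have lb := hA_lb3 x' x'' hx'x0 hρx' hreg
                      have hlt : d x' z < d x' x'' := by
                        rw [hd_val x' z (Ne.symm hzx') _ v1.1 v1.2]
                        refine lt_of_lt_of_le (hcastlt _ _ ?_)
                          (hd_lb x' x'' (Ne.symm hx''x') (3 * Bc) lb.1 lb.2)
                        have := hdrBc z
                        omega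
                      exact absurd hle (not_le.mpr hlt)
                  rintro C1 ⟨⟨h1𝓒, h1lab, h1cs, -⟩, -, h1cs2, -⟩
                    C2 ⟨⟨h2𝓒, h2lab, h2cs, -⟩, -, h2cs2, -⟩
                  simp only [id_eq] at h1lab h2lab
                  obtain ⟨h1op, h1min⟩ := (h1cs : C1 x' ≠ C1 x0 ∧
                    ∀ y, C1 y ≠ C1 x0 → d x0 x' ≤ d x0 y)
                  obtain ⟨h2op, h2min⟩ := (h2cs : C2 x' ≠ C2 x0 ∧
                    ∀ y, C2 y ≠ C2 x0 → d x0 x' ≤ d x0 y)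
                  obtain ⟨h1op2, h1min2⟩ := (h1cs2 : C1 x'' ≠ C1 x' ∧
                    ∀ y, C1 y ≠ C1 x' → d x' x'' ≤ d x' y)
                  obtain ⟨h2op2, h2min2⟩ := (h2cs2 : C2 x'' ≠ C2 x' ∧
                    ∀ y, C2 y ≠ C2 x' → d x' x'' ≤ d x' y)
                  have d1 := hsubΔ C1 h1𝓒 (h1lab.trans hCs0) h1op h1min h1op2 h1min2
                  have d2 := hsubΔ C2 h2𝓒 (h2lab.trans hCs0) h2op h2min h2op2 h2min2
                  funext z
                  refine bool_res5 (C1 z) (C2 z) (σ z) ⟨?_, ?_⟩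
                  · intro hz
                    rcases d1.2 z hz with h | h
                    · exact hdown C2 h2𝓒 z x' h d2.1
                    · rw [h]; exact d2.1
                  · intro hz
                    rcases d2.2 z hz with h | h
                    · exact hdown C1 h1𝓒 z x' h d1.1
                    · rw [h]; exact d1.1
            case pos =>
              -- CASE B : x' is on the opposite σ-side; Δ(C) ⊆ RR for members of the fiber
              have hσx'ne : σ x' ≠ σ x0 := hρne hρx'
              have hBfacts : ∀ C, C ∈ 𝓒 → C x0 = σ x0 → C x' ≠ C x0 →
                  (∀ y, C y ≠ C x0 → d x0 x' ≤ d x0 y) →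
                  (C x' = σ x') ∧ (∀ z, C z ≠ σ z → RR z) := by
                intro C hC hCx0 hop1 hmin1
                have he3 : C x' = σ x' := bool_B1 (C x') (C x0) (σ x') (σ x0) hop1 hCx0 hσx'ne
                have hglob : ∀ w, ¬ ρ w → C w ≠ σ w → False := by
                  intro w hρw hwΔ
                  have hwx0 : w ≠ x0 := by rintro rfl; exact hwΔ hCx0
                  have hopw : C w ≠ C x0 := by rw [hCx0, ← hρeq hρw]; exact hwΔ
                  have hle := hmin1 w hopw
                  have hlt : d x0 w < d x0 x' := by
                    rw [hdx0 w hwx0, hdx0 x' hx'x0, hT4n w hρw, hT4ρ x' hρx']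
                    exact hcastlt _ _ (by have h1 := hdrN w; omega)
                  exact absurd hle (not_le.mpr hlt)
                refine ⟨he3, ?_⟩
                intro z hz
                simp only [hRRdef]
                constructor
                · by_contra h0
                  exact hglob z (fun hh => hh h0) hz
                · intro w hw
                  by_contra h0
                  exact hglob w (fun hh => hh h0) (hdown C hC w z hw hz)
              refine Or.inr ⟨x', ?_⟩
              intro Cstar' hCstar'
              constructor
              · intro _
                rintro C1 ⟨⟨h1𝓒, h1lab, h1cs, h1labx'⟩, -, h1cs2⟩ C2 -
                exfalso
                obtain ⟨h1op, -⟩ := (h1cs : C1 x' ≠ C1 x0 ∧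
                  ∀ y, C1 y ≠ C1 x0 → d x0 x' ≤ d x0 y)
                exact h1op (csempty x' C1 h1cs2 x0).symm
              · intro x'' hx''
                by_cases hRx'' : RR x''
                · have hρx'' : ρ x'' := hRRρ x'' hRx''
                  have hx''x0 : x'' ≠ x0 := hρnex0 hρx''
                  have hsubΔ : ∀ C, C ∈ 𝓒 → C x0 = σ x0 → C x' ≠ C x0 →
                      (∀ y, C y ≠ C x0 → d x0 x' ≤ d x0 y) → C x'' ≠ C x' →
                      (∀ y, C y ≠ C x' → d x' x'' ≤ d x' y) →
                      (C x'' ≠ σ x'') ∧ (∀ z, C z ≠ σ z → (r z x'' ∨ z = x'')) := by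
                    intro C hC hCx0 hop1 hmin1 hop2 hmin2
                    obtain ⟨he3, hRz⟩ := hBfacts C hC hCx0 hop1 hmin1
                    have he5 : C x'' ≠ σ x'' :=
                      bool_B2 (C x'') (C x') (σ x') (σ x'') (σ x0) hop2 he3 hσx'ne (hρne hρx'')
                    refine ⟨he5, ?_⟩
                    intro z hz
                    rcases hchain C hC z x'' hz he5 with h | h | h
                    · exact Or.inr h
                    · exact Or.inl h
                    · exfalso
                      have hzR : RR z := hRz z hz
                      have hzρ : ρ z := hRRρ z hzR
                      have hopz : C z ≠ C x' :=
                        bool_B3 (C z) (σ z) (σ x0) (C x') (σ x') hz (hρne hzρ) he3 hσx'ne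
                      have hzx' : z ≠ x' := fun h0 => hopz (by rw [h0])
                      have hx''x' : x'' ≠ x' := fun h0 => hop2 (by rw [h0])
                      have hzx0 : z ≠ x0 := hρnex0 hzρ
                      have hle := hmin2 z hopz
                      have hlt : d x' z < d x' x'' := by
                        by_cases hRx' : RR x'
                        · have v1 : A x' z = dr x' + dr z := hA_RR x' z hx'x0 hzx0 hRx' hzR
                          have v1' : A z x' = dr x' + dr z := by
                            rw [hA_RR z x' hzx0 hx'x0 hzR hRx']; omega
                          have v2 : A x' x'' = dr x' + dr x'' :=
                            hA_RR x' x'' hx'x0 hx''x0 hRx' hRx''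
                          have v2' : A x'' x' = dr x' + dr x'' := by
                            rw [hA_RR x'' x' hx''x0 hx'x0 hRx'' hRx']; omega
                          rw [hd_val x' z (Ne.symm hzx') _ v1 v1',
                            hd_val x' x'' (Ne.symm hx''x') _ v2 v2']
                          exact hcastlt _ _ (by have := hdrlt h; omega)
                        · have v1 := hA_R1 x' z hx'x0 hzx0 hRx' hρx' hzR
                          have v2 := hA_R1 x' x'' hx'x0 hx''x0 hRx' hρx' hRx''
                          rw [hd_val x' z (Ne.symm hzx') _ v1.1 v1.2,
                            hd_val x' x'' (Ne.symm hx''x') _ v2.1 v2.2]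
                          refine hcastlt _ _ ?_
                          have hmul : N * dr z < N * dr x'' :=
                            mul_lt_mul_of_pos_left (hdrlt h) (by omega : 0 < N)
                          omega
                      exact absurd hle (not_le.mpr hlt)
                  rintro C1 ⟨⟨h1𝓒, h1lab, h1cs, -⟩, -, h1cs2, -⟩
                    C2 ⟨⟨h2𝓒, h2lab, h2cs, -⟩, -, h2cs2, -⟩
                  simp only [id_eq] at h1lab h2lab
                  obtain ⟨h1op, h1min⟩ := (h1cs : C1 x' ≠ C1 x0 ∧
                    ∀ y, C1 y ≠ C1 x0 → d x0 x' ≤ d x0 y)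
                  obtain ⟨h2op, h2min⟩ := (h2cs : C2 x' ≠ C2 x0 ∧
                    ∀ y, C2 y ≠ C2 x0 → d x0 x' ≤ d x0 y)
                  obtain ⟨h1op2, h1min2⟩ := (h1cs2 : C1 x'' ≠ C1 x' ∧
                    ∀ y, C1 y ≠ C1 x' → d x' x'' ≤ d x' y)
                  obtain ⟨h2op2, h2min2⟩ := (h2cs2 : C2 x'' ≠ C2 x' ∧
                    ∀ y, C2 y ≠ C2 x' → d x' x'' ≤ d x' y)
                  have d1 := hsubΔ C1 h1𝓒 (h1lab.trans hCs0) h1op h1min h1op2 h1min2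
                  have d2 := hsubΔ C2 h2𝓒 (h2lab.trans hCs0) h2op h2min h2op2 h2min2
                  funext z
                  refine bool_res5 (C1 z) (C2 z) (σ z) ⟨?_, ?_⟩
                  · intro hz
                    rcases d1.2 z hz with h | h
                    · exact hdown C2 h2𝓒 z x'' h d2.1
                    · rw [h]; exact d2.1
                  · intro hz
                    rcases d2.2 z hz with h | h
                    · exact hdown C1 h1𝓒 z x'' h d1.1
                    · rw [h]; exact d1.1
                · -- RR x'' fails : the version space must shrink to the base concept σ
                  have hsubΔ : ∀ C, C ∈ 𝓒 → C x0 = σ x0 → C x' ≠ C x0 →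
                      (∀ y, C y ≠ C x0 → d x0 x' ≤ d x0 y) → C x'' ≠ C x' →
                      (∀ y, C y ≠ C x' → d x' x'' ≤ d x' y) →
                      ∀ z, C z ≠ σ z → False := by
                    intro C hC hCx0 hop1 hmin1 hop2 hmin2 z hz
                    obtain ⟨he3, hRz⟩ := hBfacts C hC hCx0 hop1 hmin1
                    have hzR : RR z := hRz z hz
                    have hzρ : ρ z := hRRρ z hzR
                    have hopz : C z ≠ C x' :=
                      bool_B3 (C z) (σ z) (σ x0) (C x') (σ x') hz (hρne hzρ) he3 hσx'ne
                    have hzx' : z ≠ x' := fun h0 => hopz (by rw [h0])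
                    have hx''x' : x'' ≠ x' := fun h0 => hop2 (by rw [h0])
                    have hzx0 : z ≠ x0 := hρnex0 hzρ
                    have hle := hmin2 z hopz
                    have hlt : d x' z < d x' x'' := by
                      by_cases hRx' : RR x'
                      · have v1 : A x' z = dr x' + dr z := hA_RR x' z hx'x0 hzx0 hRx' hzR
                        have v1' : A z x' = dr x' + dr z := by
                          rw [hA_RR z x' hzx0 hx'x0 hzR hRx']; omega
                        have lb := hA_lb1 x' x'' hx'x0 hρx' hRx''
                        rw [hd_val x' z (Ne.symm hzx') _ v1 v1']
                        refine lt_of_lt_of_le (hcastlt _ _ ?_)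
                          (hd_lb x' x'' (Ne.symm hx''x') Bc lb.1 lb.2)
                        have e1 := hdrN x'
                        have e2 := hdrN z
                        omega
                      · have v1 := hA_R1 x' z hx'x0 hzx0 hRx' hρx' hzR
                        have lb := hA_lb2 x' x'' hx'x0 hρx' hRx' hRx''
                        rw [hd_val x' z (Ne.symm hzx') _ v1.1 v1.2]
                        refine lt_of_lt_of_le (hcastlt _ _ ?_)
                          (hd_lb x' x'' (Ne.symm hx''x') (2 * Bc) lb.1 lb.2)
                        have e1 := hdrN x'
                        have hmulN : N * dr z ≤ N * (M + 1) := Nat.mul_le_mul_left N (hdrN z)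
                        omega
                    exact absurd hle (not_le.mpr hlt)
                  rintro C1 ⟨⟨h1𝓒, h1lab, h1cs, -⟩, -, h1cs2, -⟩
                    C2 ⟨⟨h2𝓒, h2lab, h2cs, -⟩, -, h2cs2, -⟩
                  simp only [id_eq] at h1lab h2lab
                  obtain ⟨h1op, h1min⟩ := (h1cs : C1 x' ≠ C1 x0 ∧
                    ∀ y, C1 y ≠ C1 x0 → d x0 x' ≤ d x0 y)
                  obtain ⟨h2op, h2min⟩ := (h2cs : C2 x' ≠ C2 x0 ∧
                    ∀ y, C2 y ≠ C2 x0 → d x0 x' ≤ d x0 y)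
                  obtain ⟨h1op2, h1min2⟩ := (h1cs2 : C1 x'' ≠ C1 x' ∧
                    ∀ y, C1 y ≠ C1 x' → d x' x'' ≤ d x' y)
                  obtain ⟨h2op2, h2min2⟩ := (h2cs2 : C2 x'' ≠ C2 x' ∧
                    ∀ y, C2 y ≠ C2 x' → d x' x'' ≤ d x' y)
                  have d1 := hsubΔ C1 h1𝓒 (h1lab.trans hCs0) h1op h1min h1op2 h1min2
                  have d2 := hsubΔ C2 h2𝓒 (h2lab.trans hCs0) h2op h2min h2op2 h2min2
                  funext z
                  have hz1 : C1 z = σ z := by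
                    by_contra h0
                    exact d1 z h0
                  have hz2 : C2 z = σ z := by
                    by_contra h0
                    exact d2 z h0
                  rw [hz1, hz2]
      exact sInf_le ⟨2, by norm_cast, hIdent⟩
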